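/- arXiv:1303.5101 — 5 statements merged into one kernel-verified Lean document; each statement's English description precedes it below -/
import Mathlib

section
/- The polynomial x³ − (3105/2588)x² + (5751/16175)x − 4679/258800 is orthogonal to 1, x, and x² with respect to the inner product ⟨f,g⟩ = ∫₀¹ f(x)g(x)(−log x) dx. -/
open Real intervalIntegral MeasureTheory

private noncomputable def G (n : ℕ) (x : ℝ) : ℝ :=
  x ^ (n+1) / ((n:ℝ)+1)^2 - x ^ n * (x * Real.log x) / ((n:ℝ)+1)

private lemma G_cont (n : ℕ) : Continuous (G n) := by
  unfold G
  have h1 : ((n:ℝ)+1)^2 ≠ 0 := by positivity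
  have h2 : ((n:ℝ)+1) ≠ 0 := by positivity
  exact ((continuous_pow (n+1)).div_const _).sub
    (((continuous_pow n).mul Real.continuous_mul_log).div_const _)

private lemma G_deriv (n : ℕ) {x : ℝ} (hx : x ∈ Set.Ioo (0:ℝ) 1) :
    HasDerivAt (G n) (x ^ n * (-Real.log x)) x := by
  have hx0 : x ≠ 0 := ne_of_gt hx.1
  have h1 : HasDerivAt (fun y : ℝ => y ^ (n+1)) (((n:ℝ)+1) * x ^ n) x := by
    simpa using hasDerivAt_pow (n+1) x
  have hlog : HasDerivAt Real.log (1/x) x := by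
    simpa using Real.hasDerivAt_log hx0
  have h2 : HasDerivAt (fun y : ℝ => y ^ (n+1) * Real.log y)
      (((n:ℝ)+1) * x ^ n * Real.log x + x ^ (n+1) * (1/x)) x := h1.mul hlog
  have h2' : HasDerivAt (fun y : ℝ => y ^ n * (y * Real.log y))
      (((n:ℝ)+1) * x ^ n * Real.log x + x ^ (n+1) * (1/x)) x := by
    convert h2 using 2 with y
    ring
  have := (h1.div_const (((n:ℝ)+1)^2)).sub (h2'.div_const ((n:ℝ)+1))
  refine HasDerivAt.congr_deriv (f := G n) this ?_
  have hn : ((n:ℝ)+1) ≠ 0 := by positivity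
  have hp : x ^ (n+1) = x ^ n * x := pow_succ x n
  field_simp [hp]
  ring

private lemma mono_int (n : ℕ) :
    IntervalIntegrable (fun x : ℝ => x ^ n * (-Real.log x)) volume 0 1 := by
  apply intervalIntegrable_deriv_of_nonneg (g := G n) ((G_cont n).continuousOn)
  · intro x hx
    norm_num at hx
    exact G_deriv n ⟨hx.1, hx.2⟩
  · intro x hx
    norm_num at hx
    have h1 : Real.log x ≤ 0 := Real.log_nonpos hx.1.le hx.2.le
    have h2 : 0 ≤ -Real.log x := by linarith
    have h3 : (0:ℝ) ≤ x ^ n := pow_nonneg hx.1.le n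
    exact mul_nonneg h3 h2

private lemma mono_val (n : ℕ) :
    ∫ x in (0:ℝ)..1, x ^ n * (-Real.log x) = 1/((n:ℝ)+1)^2 := by
  have h := intervalIntegral.integral_eq_sub_of_hasDerivAt_of_le (f := G n)
    (f' := fun x : ℝ => x ^ n * (-Real.log x)) (by norm_num)
    ((G_cont n).continuousOn) (fun x hx => G_deriv n hx) (mono_int n)
  rw [h]
  simp [G]

private lemma combo (a b c : ℝ) (n3 n2 n1 n0 : ℕ) :
    ∫ x in (0:ℝ)..1, (x ^ n3 * (-Real.log x) - a * (x ^ n2 * (-Real.log x))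
      + b * (x ^ n1 * (-Real.log x)) - c * (x ^ n0 * (-Real.log x)))
    = 1/((n3:ℝ)+1)^2 - a * (1/((n2:ℝ)+1)^2) + b * (1/((n1:ℝ)+1)^2) - c * (1/((n0:ℝ)+1)^2) := by
  have i3 := mono_int n3
  have i2 := (mono_int n2).const_mul a
  have i1 := (mono_int n1).const_mul b
  have i0 := (mono_int n0).const_mul c
  rw [intervalIntegral.integral_sub ((i3.sub i2).add i1) i0,
    intervalIntegral.integral_add (i3.sub i2) i1,
    intervalIntegral.integral_sub i3 i2,
    intervalIntegral.integral_const_mul, intervalIntegral.integral_const_mul,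
    intervalIntegral.integral_const_mul, mono_val, mono_val, mono_val, mono_val]

theorem p3_orthogonal :
    (∫ x in (0:ℝ)..1,
      (x ^ 3 - (3105/2588) * x ^ 2 + (5751/16175) * x - 4679/258800) * (-Real.log x) = 0) ∧
    (∫ x in (0:ℝ)..1,
      x * (x ^ 3 - (3105/2588) * x ^ 2 + (5751/16175) * x - 4679/258800) * (-Real.log x) = 0) ∧
    (∫ x in (0:ℝ)..1,
      x ^ 2 * (x ^ 3 - (3105/2588) * x ^ 2 + (5751/16175) * x - 4679/258800) * (-Real.log x) = 0) := by
  refine ⟨?_, ?_, ?_⟩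
  · have e : Set.EqOn
        (fun x : ℝ => (x ^ 3 - (3105/2588) * x ^ 2 + (5751/16175) * x - 4679/258800) * (-Real.log x))
        (fun x : ℝ => x ^ 3 * (-Real.log x) - (3105/2588) * (x ^ 2 * (-Real.log x))
          + (5751/16175) * (x ^ 1 * (-Real.log x)) - (4679/258800) * (x ^ 0 * (-Real.log x)))
        (Set.uIcc 0 1) := fun x _ => by ring
    rw [intervalIntegral.integral_congr e, combo]
    norm_num
  · have e : Set.EqOn
        (fun x : ℝ => x * (x ^ 3 - (3105/2588) * x ^ 2 + (5751/16175) * x - 4679/258800) * (-Real.log x))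
        (fun x : ℝ => x ^ 4 * (-Real.log x) - (3105/2588) * (x ^ 3 * (-Real.log x))
          + (5751/16175) * (x ^ 2 * (-Real.log x)) - (4679/258800) * (x ^ 1 * (-Real.log x)))
        (Set.uIcc 0 1) := fun x _ => by ring
    rw [intervalIntegral.integral_congr e, combo]
    norm_num
  · have e : Set.EqOn
        (fun x : ℝ => x ^ 2 * (x ^ 3 - (3105/2588) * x ^ 2 + (5751/16175) * x - 4679/258800) * (-Real.log x))
        (fun x : ℝ => x ^ 5 * (-Real.log x) - (3105/2588) * (x ^ 4 * (-Real.log x))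
          + (5751/16175) * (x ^ 3 * (-Real.log x)) - (4679/258800) * (x ^ 2 * (-Real.log x)))
        (Set.uIcc 0 1) := fun x _ => by ring
    rw [intervalIntegral.integral_congr e, combo]
    norm_num
end

section
/- The polynomial p₂(x) = x² − (19/37)x + 217/7992 is orthogonal to 1 and x with respect to the inner product ⟨f,g⟩ = ∫₀¹ f(x)g(x)(log x)² dx. -/
open Real Set intervalIntegral MeasureTheory

private lemma log_sq_bound {x : ℝ} (hx : 0 < x) (hx1 : x < 1) :
    (Real.log x) ^ 2 ≤ 16 * x ^ (-(1:ℝ)/2) := by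
  have hlog : Real.log x < 0 := Real.log_neg hx hx1
  set t := -Real.log x with ht
  have htpos : 0 ≤ t := by simp [ht]; linarith
  have hrw : x ^ (-(1:ℝ)/2) = Real.exp (t / 2) := by
    rw [Real.rpow_def_of_pos hx]
    congr 1
    rw [ht]; ring
  rw [hrw]
  have h1 : 1 + t / 4 ≤ Real.exp (t / 4) := by linarith [Real.add_one_le_exp (t / 4)]
  have h2 : Real.exp (t / 2) = Real.exp (t / 4) ^ 2 := by
    rw [show t / 2 = t / 4 + t / 4 by ring, Real.exp_add, sq]
  have hlsq : (Real.log x) ^ 2 = t ^ 2 := by rw [ht]; ring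
  rw [hlsq, h2]
  nlinarith [Real.exp_pos (t / 4)]

private lemma intble (n : ℕ) :
    IntervalIntegrable (fun x => x ^ n * (Real.log x) ^ 2) volume 0 1 := by
  rw [intervalIntegrable_iff_integrableOn_Ioo_of_le zero_le_one]
  have hg : IntegrableOn (fun x : ℝ => 16 * x ^ (-(1:ℝ)/2)) (Ioo (0:ℝ) 1) volume := by
    have := (integrableOn_Ioo_rpow_iff (s := -(1:ℝ)/2) one_pos).2 (by norm_num)
    exact this.const_mul 16
  apply hg.mono' (((measurable_id.pow_const n).mul
    (Real.measurable_log.pow_const 2)).aestronglyMeasurable)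
  filter_upwards [ae_restrict_mem measurableSet_Ioo] with x hx
  simp only [id_eq, Pi.mul_apply]
  have hx0 : 0 < x := hx.1
  have hx1 : x < 1 := hx.2
  have hnn : 0 ≤ x ^ n * (Real.log x) ^ 2 := by positivity
  rw [Real.norm_eq_abs, abs_of_nonneg hnn]
  have hxn : x ^ n ≤ 1 := pow_le_one₀ hx0.le hx1.le
  calc x ^ n * (Real.log x) ^ 2 ≤ 1 * (Real.log x) ^ 2 := by
        apply mul_le_mul_of_nonneg_right hxn (by positivity)
    _ = (Real.log x) ^ 2 := one_mul _
    _ ≤ 16 * x ^ (-(1:ℝ)/2) := log_sq_bound hx0 hx1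

private lemma key (n : ℕ) :
    ∫ x in (0:ℝ)..1, x ^ n * (Real.log x) ^ 2 = 2 / ((n : ℝ) + 1) ^ 3 := by
  set c : ℝ := (n : ℝ) + 1 with hc
  have hcpos : 0 < c := by positivity
  set F : ℝ → ℝ := fun x =>
    (x ^ (n+1) * (Real.log x) ^ 2) / c - (2 * (x ^ (n+1) * Real.log x)) / c ^ 2
      + (2 * x ^ (n+1)) / c ^ 3 with hF
  have hF0 : F 0 = 0 := by simp [hF]
  have hF1 : F 1 = 2 / c ^ 3 := by simp [hF]
  have htend : Filter.Tendsto F (nhdsWithin 0 (Ioi 0)) (nhds 0) := by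
    have hr : (0:ℝ) < ((n:ℝ) + 1) / 2 := by positivity
    have t1 := tendsto_log_mul_rpow_nhdsGT_zero hr
    have h1 : Filter.Tendsto (fun x => x ^ (n+1) * (Real.log x) ^ 2)
        (nhdsWithin 0 (Ioi 0)) (nhds 0) := by
      have := t1.mul t1
      rw [mul_zero] at this
      apply this.congr'
      filter_upwards [self_mem_nhdsWithin] with x (hx : 0 < x)
      have : x ^ (((n:ℝ)+1)/2) * x ^ (((n:ℝ)+1)/2) = x ^ (n+1) := by
        rw [← Real.rpow_add hx, ← Real.rpow_natCast x (n+1)]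
        norm_num
      calc Real.log x * x ^ (((n:ℝ)+1)/2) * (Real.log x * x ^ (((n:ℝ)+1)/2))
          = (x ^ (((n:ℝ)+1)/2) * x ^ (((n:ℝ)+1)/2)) * (Real.log x) ^ 2 := by ring
        _ = x ^ (n+1) * (Real.log x) ^ 2 := by rw [this]
    have h2 : Filter.Tendsto (fun x => x ^ (n+1) * Real.log x)
        (nhdsWithin 0 (Ioi 0)) (nhds 0) := by
      have t2 := tendsto_log_mul_rpow_nhdsGT_zero (r := (n:ℝ)+1) (by positivity)
      apply t2.congr'
      filter_upwards [self_mem_nhdsWithin] with x (hx : 0 < x)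
      rw [← Real.rpow_natCast x (n+1)]
      push_cast
      ring
    have h3 : Filter.Tendsto (fun x : ℝ => x ^ (n+1)) (nhdsWithin 0 (Ioi 0)) (nhds 0) := by
      have := (continuous_pow (n+1)).tendsto (0:ℝ)
      rw [zero_pow (Nat.succ_ne_zero n)] at this
      exact this.mono_left nhdsWithin_le_nhds
    have := ((h1.div_const c).sub ((h2.const_mul 2).div_const (c^2))).add
      ((h3.const_mul 2).div_const (c^3))
    simpa [hF] using this
  have hcont : ContinuousOn F (Icc 0 1) := by
    intro x hx
    rcases eq_or_ne x 0 with rfl | hx0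
    · have : ContinuousWithinAt F (Ici 0) 0 := by
        rw [← continuousWithinAt_Ioi_iff_Ici]
        unfold ContinuousWithinAt
        rw [hF0]
        exact htend
      exact this.mono (fun y hy => hy.1)
    · apply ContinuousAt.continuousWithinAt
      have hlog : ContinuousAt Real.log x := Real.continuousAt_log hx0
      fun_prop (disch := assumption)
  have hderiv : ∀ x ∈ Ioo (0:ℝ) 1, HasDerivWithinAt F (x ^ n * (Real.log x) ^ 2) (Ioi x) x := by
    intro x hx
    have hx0 : (0:ℝ) < x := hx.1
    have hxne : x ≠ 0 := hx0.ne'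
    have hp : HasDerivAt (fun y : ℝ => y ^ (n+1)) (((n:ℝ)+1) * x ^ n) x := by
      simpa using hasDerivAt_pow (n+1) x
    have hl : HasDerivAt Real.log x⁻¹ x := Real.hasDerivAt_log hxne
    have hl2 : HasDerivAt (fun y => (Real.log y) ^ 2) (2 * Real.log x ^ 1 * x⁻¹) x := hl.pow 2
    have hd : HasDerivAt F (x ^ n * (Real.log x) ^ 2) x := by
      have := (((hp.mul hl2).div_const c).sub
        (((hp.mul hl).const_mul 2).div_const (c^2))).add ((hp.const_mul 2).div_const (c^3))
      refine this.congr_deriv ?_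
      rw [hc]
      field_simp
      ring
    exact hd.hasDerivWithinAt
  have := integral_eq_sub_of_hasDeriv_right_of_le zero_le_one hcont hderiv (intble n)
  rw [this, hF0, hF1, sub_zero]

theorem p2_orthogonal_m2 :
    (∫ x in (0:ℝ)..1, (x ^ 2 - (19/37) * x + 217/7992) * (Real.log x) ^ 2 = 0) ∧
    (∫ x in (0:ℝ)..1, x * (x ^ 2 - (19/37) * x + 217/7992) * (Real.log x) ^ 2 = 0) := by
  constructor
  · have heq : (fun x : ℝ => (x ^ 2 - (19/37) * x + 217/7992) * (Real.log x) ^ 2)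
      = fun x : ℝ => (x ^ 2 * (Real.log x) ^ 2 - (19/37) * (x ^ 1 * (Real.log x) ^ 2))
        + (217/7992) * (x ^ 0 * (Real.log x) ^ 2) := by
      funext x; ring
    rw [show (∫ x in (0:ℝ)..1, (x ^ 2 - (19/37) * x + 217/7992) * (Real.log x) ^ 2)
        = ∫ x in (0:ℝ)..1, ((x ^ 2 * (Real.log x) ^ 2 - (19/37) * (x ^ 1 * (Real.log x) ^ 2))
        + (217/7992) * (x ^ 0 * (Real.log x) ^ 2)) from by rw [heq]]
    rw [integral_add (((intble 2).sub ((intble 1).const_mul _))) ((intble 0).const_mul _),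
      integral_sub (intble 2) ((intble 1).const_mul _),
      intervalIntegral.integral_const_mul, intervalIntegral.integral_const_mul, key 0, key 1, key 2]
    norm_num
  · have heq : (fun x : ℝ => x * (x ^ 2 - (19/37) * x + 217/7992) * (Real.log x) ^ 2)
      = fun x : ℝ => (x ^ 3 * (Real.log x) ^ 2 - (19/37) * (x ^ 2 * (Real.log x) ^ 2))
        + (217/7992) * (x ^ 1 * (Real.log x) ^ 2) := by
      funext x; ring
    rw [show (∫ x in (0:ℝ)..1, x * (x ^ 2 - (19/37) * x + 217/7992) * (Real.log x) ^ 2)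
        = ∫ x in (0:ℝ)..1, ((x ^ 3 * (Real.log x) ^ 2 - (19/37) * (x ^ 2 * (Real.log x) ^ 2))
        + (217/7992) * (x ^ 1 * (Real.log x) ^ 2)) from by rw [heq]]
    rw [integral_add (((intble 3).sub ((intble 2).const_mul _))) ((intble 1).const_mul _),
      integral_sub (intble 3) ((intble 2).const_mul _),
      intervalIntegral.integral_const_mul, intervalIntegral.integral_const_mul, key 1, key 2, key 3]
    norm_num
end

section
/- The polynomial p₂(x) = x² − (13/35)x + 493/45360 is orthogonal to 1 and x with respect to the inner product ⟨f,g⟩ = ∫₀¹ f(x)g(x)(−log x)³ dx. -/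
open Real MeasureTheory Filter Set intervalIntegral Topology

lemma neglog_le_aux {x : ℝ} (hx : 0 < x) : -Real.log x ≤ 6 * x ^ (-(1:ℝ)/6) := by
  have h1 : Real.log (x ^ (-(1:ℝ)/6)) = (-(1:ℝ)/6) * Real.log x := Real.log_rpow hx _
  have h2 : Real.log (x ^ (-(1:ℝ)/6)) ≤ x ^ (-(1:ℝ)/6) - 1 :=
    Real.log_le_sub_one_of_pos (Real.rpow_pos_of_pos hx _)
  nlinarith [Real.rpow_pos_of_pos hx (-(1:ℝ)/6)]

lemma integ_aux (n : ℕ) :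
    IntervalIntegrable (fun x : ℝ => x ^ n * (-Real.log x) ^ 3) volume 0 1 := by
  rw [intervalIntegrable_iff_integrableOn_Ioc_of_le (by norm_num)]
  have hg : IntegrableOn (fun x : ℝ => 216 * x ^ (-(1:ℝ)/2)) (Ioc 0 1) volume := by
    have : IntervalIntegrable (fun x : ℝ => x ^ (-(1:ℝ)/2)) volume 0 1 := by
      apply intervalIntegrable_rpow'
      norm_num
    exact ((intervalIntegrable_iff_integrableOn_Ioc_of_le (by norm_num)).mp this).const_mul 216
  apply MeasureTheory.Integrable.mono hg
  · apply ContinuousOn.aestronglyMeasurable _ measurableSet_Ioc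
    apply ContinuousOn.mul (by fun_prop)
    apply ContinuousOn.pow
    apply ContinuousOn.neg
    exact Real.continuousOn_log.mono (fun x hx => ne_of_gt hx.1)
  · rw [ae_restrict_iff' measurableSet_Ioc]
    filter_upwards with x hx
    have hx0 := hx.1
    have hx1 := hx.2
    have hlog : 0 ≤ -Real.log x := by
      simp only [neg_nonneg]
      exact Real.log_nonpos hx0.le hx1
    have hb : -Real.log x ≤ 6 * x ^ (-(1:ℝ)/6) := neglog_le_aux hx0
    have hxn : x ^ n ≤ 1 := pow_le_one₀ hx0.le hx1
    have hxnn : (0:ℝ) ≤ x ^ n := pow_nonneg hx0.le n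
    have hc : (-Real.log x) ^ 3 ≤ (6 * x ^ (-(1:ℝ)/6)) ^ 3 := by
      exact pow_le_pow_left₀ hlog hb 3
    have hrw : (6 * x ^ (-(1:ℝ)/6)) ^ 3 = 216 * x ^ (-(1:ℝ)/2) := by
      rw [mul_pow, ← Real.rpow_natCast (x ^ (-(1:ℝ)/6)) 3, ← Real.rpow_mul hx0.le]
      norm_num
    rw [Real.norm_eq_abs, Real.norm_eq_abs]
    have h216 : (0:ℝ) ≤ 216 * x ^ (-(1:ℝ)/2) := by positivity
    rw [abs_of_nonneg (by positivity), abs_of_nonneg h216]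
    calc x ^ n * (-Real.log x) ^ 3 ≤ 1 * (-Real.log x) ^ 3 := by
          apply mul_le_mul_of_nonneg_right hxn (by positivity)
      _ = (-Real.log x) ^ 3 := one_mul _
      _ ≤ (6 * x ^ (-(1:ℝ)/6)) ^ 3 := hc
      _ = 216 * x ^ (-(1:ℝ)/2) := hrw

lemma hasDeriv_aux (n : ℕ) {x : ℝ} (hx : 0 < x) :
    HasDerivAt (fun x : ℝ =>
      (x ^ (n+1) * (-Real.log x) ^ 3) / ((n:ℝ)+1)
      + (3 * (x ^ (n+1) * (-Real.log x) ^ 2)) / ((n:ℝ)+1) ^ 2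
      + (6 * (x ^ (n+1) * (-Real.log x))) / ((n:ℝ)+1) ^ 3
      + (6 * x ^ (n+1)) / ((n:ℝ)+1) ^ 4)
      (x ^ n * (-Real.log x) ^ 3) x := by
  have hm : ((n:ℝ)+1) ≠ 0 := by positivity
  have hl : HasDerivAt (fun x : ℝ => -Real.log x) (-x⁻¹) x :=
    (Real.hasDerivAt_log hx.ne').neg
  have hp : HasDerivAt (fun x : ℝ => x ^ (n+1)) (((n:ℝ)+1) * x ^ n) x := by
    simpa using hasDerivAt_pow (n+1) x
  have h3 := (hp.mul (hl.pow 3)).div_const ((n:ℝ)+1)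
  have h2 := ((hp.mul (hl.pow 2)).const_mul 3).div_const (((n:ℝ)+1) ^ 2)
  have h1 := ((hp.mul hl).const_mul 6).div_const (((n:ℝ)+1) ^ 3)
  have h0 := (hp.const_mul 6).div_const (((n:ℝ)+1) ^ 4)
  have := ((h3.add h2).add h1).add h0
  refine this.congr_deriv ?_
  simp only [Pi.pow_apply]
  have hxpow : x ^ (n+1) = x * x ^ n := by ring
  field_simp
  ring

lemma tendsto_term_aux (n k : ℕ) (hk : 0 < k) :
    Tendsto (fun x : ℝ => x ^ (n+1) * (-Real.log x) ^ k) (𝓝[>] 0) (𝓝 0) := by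
  have h := (tendsto_log_mul_rpow_nhdsGT_zero
    (r := ((n:ℝ)+1)/k) (by positivity)).neg
  have h2 : Tendsto (fun x : ℝ => (-(Real.log x * x ^ (((n:ℝ)+1)/k))) ^ k) (𝓝[>] 0)
      (𝓝 0) := by
    have := h.pow k
    simpa [zero_pow hk.ne'] using this
  apply h2.congr'
  filter_upwards [self_mem_nhdsWithin] with x (hx : 0 < x)
  have : (x ^ (((n:ℝ)+1)/k)) ^ k = x ^ (n+1) := by
    rw [← Real.rpow_natCast (x ^ (((n:ℝ)+1)/k)) k, ← Real.rpow_mul hx.le,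
      div_mul_cancel₀ _ (by exact_mod_cast hk.ne' : (k:ℝ) ≠ 0), ← Real.rpow_natCast x (n+1)]
    push_cast
    ring_nf
  calc (-(Real.log x * x ^ (((n:ℝ)+1)/k))) ^ k
      = (-Real.log x) ^ k * (x ^ (((n:ℝ)+1)/k)) ^ k := by ring
    _ = x ^ (n+1) * (-Real.log x) ^ k := by rw [this]; ring

lemma moment_aux (n : ℕ) :
    ∫ x in (0:ℝ)..1, x ^ n * (-Real.log x) ^ 3 = 6 / ((n:ℝ)+1) ^ 4 := by
  have hm : ((n:ℝ)+1) ≠ 0 := by positivity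
  set F : ℝ → ℝ := fun x =>
      (x ^ (n+1) * (-Real.log x) ^ 3) / ((n:ℝ)+1)
      + (3 * (x ^ (n+1) * (-Real.log x) ^ 2)) / ((n:ℝ)+1) ^ 2
      + (6 * (x ^ (n+1) * (-Real.log x))) / ((n:ℝ)+1) ^ 3
      + (6 * x ^ (n+1)) / ((n:ℝ)+1) ^ 4 with hF
  have key := intervalIntegral.integral_eq_sub_of_hasDerivAt_of_tendsto
    (f := F) (f' := fun x => x ^ n * (-Real.log x) ^ 3)
    (a := (0:ℝ)) (b := 1) (fa := 0) (fb := 6 / ((n:ℝ)+1) ^ 4)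
    (by norm_num)
    (fun x hx => hasDeriv_aux n hx.1)
    (integ_aux n)
    ?_ ?_
  · rw [key, sub_zero]
  · -- tendsto at 0⁺
    have t3 := (tendsto_term_aux n 3 (by norm_num)).div_const ((n:ℝ)+1)
    have t2 := ((tendsto_term_aux n 2 (by norm_num)).const_mul 3).div_const (((n:ℝ)+1) ^ 2)
    have t1 := ((tendsto_term_aux n 1 (by norm_num)).const_mul 6).div_const (((n:ℝ)+1) ^ 3)
    have t0 : Tendsto (fun x : ℝ => (6 * x ^ (n+1)) / ((n:ℝ)+1) ^ 4) (𝓝[>] (0:ℝ)) (𝓝 0) := by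
      have : Tendsto (fun x : ℝ => (6 * x ^ (n+1)) / ((n:ℝ)+1) ^ 4) (𝓝 (0:ℝ))
          (𝓝 ((6 * (0:ℝ) ^ (n+1)) / ((n:ℝ)+1) ^ 4)) :=
        ((continuous_const.mul (continuous_pow (n+1))).div_const (((n:ℝ)+1) ^ 4)).tendsto 0
      simpa using this.mono_left nhdsWithin_le_nhds
    simp only [pow_one] at t1
    have h := ((t3.add t2).add t1).add t0
    simpa only [zero_div, mul_zero, zero_mul, add_zero, zero_add] using h
  · -- tendsto at 1⁻
    have hc : ContinuousAt F 1 := (hasDeriv_aux n (by norm_num : (0:ℝ) < 1)).continuousAt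
    have hF1 : F 1 = 6 / ((n:ℝ)+1) ^ 4 := by simp [hF]
    rw [← hF1]
    exact hc.continuousWithinAt.tendsto

theorem p2_orthogonal_m3 :
    (∫ x in (0:ℝ)..1, (x ^ 2 - (13/35) * x + 493/45360) * (-Real.log x) ^ 3 = 0) ∧
    (∫ x in (0:ℝ)..1, x * (x ^ 2 - (13/35) * x + 493/45360) * (-Real.log x) ^ 3 = 0) := by
  have i0 := integ_aux 0
  have i1 := integ_aux 1
  have i2 := integ_aux 2
  have i3 := integ_aux 3
  have m0 := moment_aux 0
  have m1 := moment_aux 1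
  have m2 := moment_aux 2
  have m3 := moment_aux 3
  constructor
  · have e : ∀ x : ℝ, (x ^ 2 - (13/35) * x + 493/45360) * (-Real.log x) ^ 3
        = x ^ 2 * (-Real.log x) ^ 3 - (13/35) * (x ^ 1 * (-Real.log x) ^ 3)
          + (493/45360) * (x ^ 0 * (-Real.log x) ^ 3) := by intro x; ring
    simp only [e]
    rw [intervalIntegral.integral_add (i2.sub (i1.const_mul _)) (i0.const_mul _),
      intervalIntegral.integral_sub i2 (i1.const_mul _),
      intervalIntegral.integral_const_mul, intervalIntegral.integral_const_mul,
      m0, m1, m2]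
    norm_num
  · have e : ∀ x : ℝ, x * (x ^ 2 - (13/35) * x + 493/45360) * (-Real.log x) ^ 3
        = x ^ 3 * (-Real.log x) ^ 3 - (13/35) * (x ^ 2 * (-Real.log x) ^ 3)
          + (493/45360) * (x ^ 1 * (-Real.log x) ^ 3) := by intro x; ring
    simp only [e]
    rw [intervalIntegral.integral_add (i3.sub (i2.const_mul _)) (i1.const_mul _),
      intervalIntegral.integral_sub i3 (i2.const_mul _),
      intervalIntegral.integral_const_mul, intervalIntegral.integral_const_mul,
      m1, m2, m3]
    norm_num
end

section
/- For every nonnegative integer m, the polynomial p₂(x) = x² + ((3^(m+1) − 2^(m+1))/(3^(m+1) − 4^(m+1)))·x + (4^(m+1)·3^(−1−m) − 3^(m+1)·2^(−1−m))/(3^(m+1) − 4^(m+1)) is orthogonal to both 1 and x with respect to the inner product ⟨f,g⟩ = ∫₀¹ f(x)g(x)(−log x)^m dx. -/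
open MeasureTheory Set Real

lemma moment_formula (m n : ℕ) :
    ∫ x in (0:ℝ)..1, x ^ n * (-Real.log x) ^ m
      = (m.factorial : ℝ) / (n + 1) ^ (m + 1) := by
  rw [intervalIntegral.integral_of_le (by norm_num : (0:ℝ) ≤ 1),
    MeasureTheory.integral_Ioc_eq_integral_Ioo]
  have himg : (fun t : ℝ => Real.exp (-t)) '' (Ioi 0) = Ioo 0 1 := by
    ext y
    simp only [mem_image, mem_Ioi, mem_Ioo]
    constructor
    · rintro ⟨t, ht, rfl⟩
      exact ⟨Real.exp_pos _, Real.exp_lt_one_iff.mpr (by linarith)⟩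
    · rintro ⟨hy0, hy1⟩
      exact ⟨-Real.log y, by simpa using Real.log_neg hy0 hy1,
        by rw [neg_neg, Real.exp_log hy0]⟩
  rw [← himg,
    integral_image_eq_integral_abs_deriv_smul measurableSet_Ioi
      (fun t _ => ((hasDerivAt_neg t).exp).hasDerivWithinAt)
      (fun a _ b _ hab => by
        have := Real.exp_injective hab; linarith [neg_injective this])]
  have key : ∫ t in Ioi (0:ℝ), t ^ ((m + 1 : ℝ) - 1) * Real.exp (-((n + 1 : ℝ) * t))
      = (1 / (n + 1 : ℝ)) ^ (m + 1 : ℝ) * Real.Gamma (m + 1) :=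
    integral_rpow_mul_exp_neg_mul_Ioi (by positivity) (by positivity)
  have congr1 : ∫ t in Ioi (0:ℝ),
      |Real.exp (-t) * -1| • (Real.exp (-t) ^ n * (-Real.log (Real.exp (-t))) ^ m)
      = ∫ t in Ioi (0:ℝ), t ^ ((m + 1 : ℝ) - 1) * Real.exp (-((n + 1 : ℝ) * t)) := by
    refine setIntegral_congr_fun measurableSet_Ioi fun t ht => ?_
    have ht' : (0:ℝ) ≤ t := (le_of_lt ht)
    rw [Real.log_exp]
    have : ((m + 1 : ℝ) - 1) = (m : ℝ) := by ring
    rw [this, Real.rpow_natCast]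
    have hexp : |Real.exp (-t) * -1| = Real.exp (-t) := by
      rw [abs_mul, abs_neg, abs_one, mul_one, abs_of_pos (Real.exp_pos _)]
    rw [hexp, smul_eq_mul, neg_neg, ← Real.exp_nat_mul]
    rw [show -((n + 1 : ℝ) * t) = (n : ℝ) * (-t) + (-t) by ring, Real.exp_add]
    ring
  rw [congr1, key]
  rw [show ((m:ℝ) + 1) = ((m + 1 : ℕ) : ℝ) by push_cast; ring, Real.rpow_natCast]
  rw [show ((m + 1 : ℕ) : ℝ) = (m : ℝ) + 1 by push_cast; ring, Real.Gamma_nat_eq_factorial]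
  rw [div_pow, one_pow]
  ring

lemma moment_integrable (m n : ℕ) :
    IntervalIntegrable (fun x : ℝ => x ^ n * (-Real.log x) ^ m) volume 0 1 := by
  rw [intervalIntegrable_iff_integrableOn_Ioo_of_le (by norm_num : (0:ℝ) ≤ 1)]
  have himg : (fun t : ℝ => Real.exp (-t)) '' (Ioi 0) = Ioo 0 1 := by
    ext y
    simp only [mem_image, mem_Ioi, mem_Ioo]
    constructor
    · rintro ⟨t, ht, rfl⟩
      exact ⟨Real.exp_pos _, Real.exp_lt_one_iff.mpr (by linarith)⟩
    · rintro ⟨hy0, hy1⟩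
      exact ⟨-Real.log y, by simpa using Real.log_neg hy0 hy1,
        by rw [neg_neg, Real.exp_log hy0]⟩
  rw [← himg,
    integrableOn_image_iff_integrableOn_abs_deriv_smul measurableSet_Ioi
      (fun t _ => ((hasDerivAt_neg t).exp).hasDerivWithinAt)
      (fun a _ b _ hab => by
        have := Real.exp_injective hab; linarith [neg_injective this])]
  have hint : IntegrableOn (fun t : ℝ => t ^ ((m:ℝ)) * Real.exp (-(n + 1 : ℝ) * t ^ (1:ℝ)))
      (Ioi 0) :=
    integrableOn_rpow_mul_exp_neg_mul_rpow (lt_of_lt_of_le neg_one_lt_zero (Nat.cast_nonneg m)) (by norm_num) (by positivity)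
  refine hint.congr_fun (fun t ht => ?_) measurableSet_Ioi
  rw [mem_Ioi] at ht
  dsimp only
  rw [Real.rpow_one, Real.rpow_natCast, Real.log_exp, neg_neg, smul_eq_mul]
  have hexp : |Real.exp (-t) * -1| = Real.exp (-t) := by
    rw [abs_mul, abs_neg, abs_one, mul_one, abs_of_pos (Real.exp_pos _)]
  rw [hexp, ← Real.exp_nat_mul,
    show -((n:ℝ) + 1) * t = (n : ℝ) * (-t) + (-t) by ring, Real.exp_add]
  ring

theorem p2_orthogonal_general (m : ℕ) :
    (∫ x in (0:ℝ)..1,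
      (x ^ 2 + (((3:ℝ) ^ (m+1) - 2 ^ (m+1)) / ((3:ℝ) ^ (m+1) - 4 ^ (m+1))) * x
        + ((4:ℝ) ^ (m+1) * (3:ℝ) ^ (-1 - (m:ℤ)) - (3:ℝ) ^ (m+1) * (2:ℝ) ^ (-1 - (m:ℤ)))
            / ((3:ℝ) ^ (m+1) - 4 ^ (m+1))) * (-Real.log x) ^ m = 0) ∧
    (∫ x in (0:ℝ)..1,
      x * (x ^ 2 + (((3:ℝ) ^ (m+1) - 2 ^ (m+1)) / ((3:ℝ) ^ (m+1) - 4 ^ (m+1))) * x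
        + ((4:ℝ) ^ (m+1) * (3:ℝ) ^ (-1 - (m:ℤ)) - (3:ℝ) ^ (m+1) * (2:ℝ) ^ (-1 - (m:ℤ)))
            / ((3:ℝ) ^ (m+1) - 4 ^ (m+1))) * (-Real.log x) ^ m = 0) := by
  set k := m + 1 with hk
  have h4 : (3:ℝ) ^ k < 4 ^ k := by
    exact pow_lt_pow_left₀ (by norm_num) (by norm_num) (by omega)
  have hD : (3:ℝ) ^ k - 4 ^ k ≠ 0 := sub_ne_zero.mpr (ne_of_lt h4)
  have h2k : (2:ℝ) ^ k ≠ 0 := by positivity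
  have h3k : (3:ℝ) ^ k ≠ 0 := by positivity
  have h4k : (4:ℝ) ^ k ≠ 0 := by positivity
  have h42 : (4:ℝ) ^ k = ((2:ℝ) ^ k) ^ 2 := by
    rw [show (4:ℝ) = 2 ^ 2 by norm_num, ← pow_mul, mul_comm, pow_mul]
  have hz3 : (3:ℝ) ^ (-1 - (m:ℤ)) = ((3:ℝ) ^ k)⁻¹ := by
    rw [show (-1 - (m:ℤ)) = -((k:ℕ):ℤ) by push_cast [hk]; ring, zpow_neg, zpow_natCast]
  have hz2 : (2:ℝ) ^ (-1 - (m:ℤ)) = ((2:ℝ) ^ k)⁻¹ := by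
    rw [show (-1 - (m:ℤ)) = -((k:ℕ):ℤ) by push_cast [hk]; ring, zpow_neg, zpow_natCast]
  set c1 : ℝ := ((3:ℝ) ^ k - 2 ^ k) / ((3:ℝ) ^ k - 4 ^ k) with hc1
  set c0 : ℝ := ((4:ℝ) ^ k * (3:ℝ) ^ (-1 - (m:ℤ)) - (3:ℝ) ^ k * (2:ℝ) ^ (-1 - (m:ℤ)))
      / ((3:ℝ) ^ k - 4 ^ k) with hc0
  have i0 := moment_integrable m 0
  have i1 := moment_integrable m 1
  have i2 := moment_integrable m 2
  have i3 := moment_integrable m 3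
  have h0 := moment_formula m 0
  have h1 := moment_formula m 1
  have h2 := moment_formula m 2
  have h3 := moment_formula m 3
  rw [show (((3:ℕ):ℝ) + 1) ^ (m + 1) = 2 ^ (m + 1) * 2 ^ (m + 1) by
    rw [show ((3:ℕ):ℝ) + 1 = 2 * 2 by norm_num, mul_pow]] at h3
  rw [show ((0:ℕ):ℝ) + 1 = 1 by norm_num, one_pow, div_one] at h0
  rw [show ((1:ℕ):ℝ) + 1 = 2 by norm_num] at h1
  rw [show ((2:ℕ):ℝ) + 1 = 3 by norm_num] at h2
  constructor
  · have e : (fun x : ℝ => (x ^ 2 + c1 * x + c0) * (-Real.log x) ^ m)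
        = fun x : ℝ => x ^ 2 * (-Real.log x) ^ m + (c1 * (x ^ 1 * (-Real.log x) ^ m)
          + c0 * (x ^ 0 * (-Real.log x) ^ m)) := by
      funext x; ring
    show (∫ x in (0:ℝ)..1, (x ^ 2 + c1 * x + c0) * (-Real.log x) ^ m) = 0
    rw [show (fun x : ℝ => (x ^ 2 + c1 * x + c0) * (-Real.log x) ^ m) = _ from e,
      intervalIntegral.integral_add i2 ((i1.const_mul c1).add (i0.const_mul c0)),
      intervalIntegral.integral_add (i1.const_mul c1) (i0.const_mul c0),
      intervalIntegral.integral_const_mul, intervalIntegral.integral_const_mul,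
      h0, h1, h2, hc1, hc0, hz3, hz2]
    rw [h42] at hD ⊢
    field_simp
    ring
  · have e : (fun x : ℝ => x * (x ^ 2 + c1 * x + c0) * (-Real.log x) ^ m)
        = fun x : ℝ => x ^ 3 * (-Real.log x) ^ m + (c1 * (x ^ 2 * (-Real.log x) ^ m)
          + c0 * (x ^ 1 * (-Real.log x) ^ m)) := by
      funext x; ring
    show (∫ x in (0:ℝ)..1, x * (x ^ 2 + c1 * x + c0) * (-Real.log x) ^ m) = 0
    rw [show (fun x : ℝ => x * (x ^ 2 + c1 * x + c0) * (-Real.log x) ^ m) = _ from e,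
      intervalIntegral.integral_add i3 ((i2.const_mul c1).add (i1.const_mul c0)),
      intervalIntegral.integral_add (i2.const_mul c1) (i1.const_mul c0),
      intervalIntegral.integral_const_mul, intervalIntegral.integral_const_mul,
      h1, h2, h3, hc1, hc0, hz3, hz2]
    rw [h42] at hD ⊢
    field_simp
    simp only [hk]
    ring
end

section
/- The polynomial p₄(x) = x⁴ − 2((π⁴ − 78π² + 672)/(π²(π² − 10)))x² + (π⁶ − 114π⁴ + 1728π² − 6912)/(π⁴(π² − 10)) satisfies ∫_{−1}^{1} p₄(x)cos(πx/2) dx = 0 and ∫_{−1}^{1} x² p₄(x)cos(πx/2) dx = 0. -/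
open Real

lemma hd_sc (S C : ℝ → ℝ) (s c : ℝ) (x : ℝ) (hS : HasDerivAt S s x) (hC : HasDerivAt C c x) :
    HasDerivAt (fun y => Real.sin (π*y/2) * S y + Real.cos (π*y/2) * C y)
      (Real.cos (π*x/2)*(π/2)*S x + Real.sin (π*x/2)*s + (-Real.sin (π*x/2)*(π/2))*C x + Real.cos (π*x/2)*c) x := by
  have hl : HasDerivAt (fun y : ℝ => π*y/2) (π/2) x := by
    simpa using ((hasDerivAt_id x).const_mul π).div_const 2
  simpa [Function.comp, add_assoc, Pi.add_def, Pi.mul_def] using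
    ((((Real.hasDerivAt_sin _).comp x hl).mul hS).add (((Real.hasDerivAt_cos _).comp x hl).mul hC))

lemma moment0 : ∫ x in (-1:ℝ)..1, Real.cos (π*x/2) = 4/π := by
  have hπ : (π:ℝ) ≠ 0 := Real.pi_ne_zero
  have key : ∀ x ∈ Set.uIcc (-1:ℝ) 1,
      HasDerivAt (fun y => Real.sin (π*y/2) * (2/π) + Real.cos (π*y/2) * 0)
        (Real.cos (π*x/2)) x := by
    intro x _
    have h := hd_sc (fun _ => 2/π) (fun _ => 0) 0 0 x (hasDerivAt_const x _) (hasDerivAt_const x _)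
    convert h using 1
    field_simp
    ring
  rw [intervalIntegral.integral_eq_sub_of_hasDerivAt key
    ((Continuous.intervalIntegrable (by fun_prop) _ _))]
  simp only [mul_one, mul_neg_one, neg_div, Real.sin_neg, Real.cos_neg,
    Real.sin_pi_div_two, Real.cos_pi_div_two]
  field_simp
  ring

lemma moment2 : ∫ x in (-1:ℝ)..1, x^2 * Real.cos (π*x/2) = 4/π - 32/π^3 := by
  have hπ : (π:ℝ) ≠ 0 := Real.pi_ne_zero
  have key : ∀ x ∈ Set.uIcc (-1:ℝ) 1,
      HasDerivAt (fun y => Real.sin (π*y/2) * (2*y^2/π - 16/π^3) + Real.cos (π*y/2) * (8*y/π^2))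
        (x^2 * Real.cos (π*x/2)) x := by
    intro x _
    have hS : HasDerivAt (fun y : ℝ => 2*y^2/π - 16/π^3) (2*(2*x^1)/π) x := by
      simpa using (((hasDerivAt_pow 2 x).const_mul (2:ℝ)).div_const π).sub_const (16/π^3)
    have hC : HasDerivAt (fun y : ℝ => 8*y/π^2) (8/π^2) x := by
      simpa using ((hasDerivAt_id x).const_mul (8:ℝ)).div_const (π^2)
    have h := hd_sc _ _ _ _ x hS hC
    convert h using 1
    field_simp
    ring
  rw [intervalIntegral.integral_eq_sub_of_hasDerivAt key
    ((Continuous.intervalIntegrable (by fun_prop) _ _))]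
  simp only [mul_one, mul_neg_one, neg_div, Real.sin_neg, Real.cos_neg,
    Real.sin_pi_div_two, Real.cos_pi_div_two]
  field_simp
  ring

lemma moment4 : ∫ x in (-1:ℝ)..1, x^4 * Real.cos (π*x/2) = 4/π - 192/π^3 + 1536/π^5 := by
  have hπ : (π:ℝ) ≠ 0 := Real.pi_ne_zero
  have key : ∀ x ∈ Set.uIcc (-1:ℝ) 1,
      HasDerivAt (fun y => Real.sin (π*y/2) * (2*y^4/π - 96*y^2/π^3 + 768/π^5)
          + Real.cos (π*y/2) * (16*y^3/π^2 - 384*y/π^4))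
        (x^4 * Real.cos (π*x/2)) x := by
    intro x _
    have hS : HasDerivAt (fun y : ℝ => 2*y^4/π - 96*y^2/π^3 + 768/π^5)
        (2*(4*x^3)/π - 96*(2*x^1)/π^3) x := by
      simpa using ((((hasDerivAt_pow 4 x).const_mul (2:ℝ)).div_const π).sub
        (((hasDerivAt_pow 2 x).const_mul (96:ℝ)).div_const (π^3))).add_const (768/π^5)
    have hC : HasDerivAt (fun y : ℝ => 16*y^3/π^2 - 384*y/π^4)
        (16*(3*x^2)/π^2 - 384/π^4) x := by
      simpa [Pi.sub_def] using ((((hasDerivAt_pow 3 x).const_mul (16:ℝ)).div_const (π^2)).sub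
        (((hasDerivAt_id x).const_mul (384:ℝ)).div_const (π^4)))
    have h := hd_sc _ _ _ _ x hS hC
    convert h using 1
    field_simp
    ring
  rw [intervalIntegral.integral_eq_sub_of_hasDerivAt key
    ((Continuous.intervalIntegrable (by fun_prop) _ _))]
  simp only [mul_one, mul_neg_one, neg_div, Real.sin_neg, Real.cos_neg,
    Real.sin_pi_div_two, Real.cos_pi_div_two]
  field_simp
  ring

lemma moment6 : ∫ x in (-1:ℝ)..1, x^6 * Real.cos (π*x/2)
    = 4/π - 480/π^3 + 23040/π^5 - 184320/π^7 := by
  have hπ : (π:ℝ) ≠ 0 := Real.pi_ne_zero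
  have key : ∀ x ∈ Set.uIcc (-1:ℝ) 1,
      HasDerivAt (fun y => Real.sin (π*y/2) * (2*y^6/π - 240*y^4/π^3 + 11520*y^2/π^5 - 92160/π^7)
          + Real.cos (π*y/2) * (24*y^5/π^2 - 1920*y^3/π^4 + 46080*y/π^6))
        (x^6 * Real.cos (π*x/2)) x := by
    intro x _
    have hS : HasDerivAt (fun y : ℝ => 2*y^6/π - 240*y^4/π^3 + 11520*y^2/π^5 - 92160/π^7)
        (2*(6*x^5)/π - 240*(4*x^3)/π^3 + 11520*(2*x^1)/π^5) x := by
      simpa using (((((hasDerivAt_pow 6 x).const_mul (2:ℝ)).div_const π).sub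
        (((hasDerivAt_pow 4 x).const_mul (240:ℝ)).div_const (π^3))).add
        (((hasDerivAt_pow 2 x).const_mul (11520:ℝ)).div_const (π^5))).sub_const (92160/π^7)
    have hC : HasDerivAt (fun y : ℝ => 24*y^5/π^2 - 1920*y^3/π^4 + 46080*y/π^6)
        (24*(5*x^4)/π^2 - 1920*(3*x^2)/π^4 + 46080/π^6) x := by
      simpa [Pi.sub_def, Pi.add_def] using ((((hasDerivAt_pow 5 x).const_mul (24:ℝ)).div_const (π^2)).sub
        (((hasDerivAt_pow 3 x).const_mul (1920:ℝ)).div_const (π^4))).add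
        (((hasDerivAt_id x).const_mul (46080:ℝ)).div_const (π^6))
    have h := hd_sc _ _ _ _ x hS hC
    convert h using 1
    field_simp
    ring
  rw [intervalIntegral.integral_eq_sub_of_hasDerivAt key
    ((Continuous.intervalIntegrable (by fun_prop) _ _))]
  simp only [mul_one, mul_neg_one, neg_div, Real.sin_neg, Real.cos_neg,
    Real.sin_pi_div_two, Real.cos_pi_div_two]
  field_simp
  ring

theorem cos_p4 :
    (∫ x in (-1:ℝ)..1,
      (x ^ 4 - 2 * ((π^4 - 78*π^2 + 672) / (π^2 * (π^2 - 10))) * x ^ 2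
        + (π^6 - 114*π^4 + 1728*π^2 - 6912) / (π^4 * (π^2 - 10))) * Real.cos (π * x / 2) = 0) ∧
    (∫ x in (-1:ℝ)..1,
      x ^ 2 * (x ^ 4 - 2 * ((π^4 - 78*π^2 + 672) / (π^2 * (π^2 - 10))) * x ^ 2
        + (π^6 - 114*π^4 + 1728*π^2 - 6912) / (π^4 * (π^2 - 10))) * Real.cos (π * x / 2) = 0) := by
  have hπ : (π:ℝ) ≠ 0 := Real.pi_ne_zero
  have h10 : (π:ℝ)^2 - 10 ≠ 0 := by
    nlinarith [Real.pi_lt_d2, Real.pi_gt_three]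
  set c : ℝ := (π^4 - 78*π^2 + 672) / (π^2 * (π^2 - 10)) with hc
  set d : ℝ := (π^6 - 114*π^4 + 1728*π^2 - 6912) / (π^4 * (π^2 - 10)) with hd
  have hf0 : IntervalIntegrable (fun x : ℝ => Real.cos (π*x/2)) MeasureTheory.volume (-1) 1 :=
    Continuous.intervalIntegrable (by fun_prop) _ _
  have hf2 : IntervalIntegrable (fun x : ℝ => x^2 * Real.cos (π*x/2)) MeasureTheory.volume (-1) 1 :=
    Continuous.intervalIntegrable (by fun_prop) _ _
  have hf4 : IntervalIntegrable (fun x : ℝ => x^4 * Real.cos (π*x/2)) MeasureTheory.volume (-1) 1 :=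
    Continuous.intervalIntegrable (by fun_prop) _ _
  have hf6 : IntervalIntegrable (fun x : ℝ => x^6 * Real.cos (π*x/2)) MeasureTheory.volume (-1) 1 :=
    Continuous.intervalIntegrable (by fun_prop) _ _
  constructor
  · have e1 : (∫ x in (-1:ℝ)..1, (x ^ 4 - 2 * c * x ^ 2 + d) * Real.cos (π * x / 2))
        = ∫ x in (-1:ℝ)..1, (x^4 * Real.cos (π*x/2) - (2*c) * (x^2 * Real.cos (π*x/2))
            + d * Real.cos (π*x/2)) :=
      intervalIntegral.integral_congr (fun x _ => by ring)
    rw [e1, intervalIntegral.integral_add (hf4.sub (hf2.const_mul _)) (hf0.const_mul _),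
      intervalIntegral.integral_sub hf4 (hf2.const_mul _),
      intervalIntegral.integral_const_mul, intervalIntegral.integral_const_mul,
      moment0, moment2, moment4, hc, hd]
    field_simp
    ring
  · have e2 : (∫ x in (-1:ℝ)..1, x ^ 2 * (x ^ 4 - 2 * c * x ^ 2 + d) * Real.cos (π * x / 2))
        = ∫ x in (-1:ℝ)..1, (x^6 * Real.cos (π*x/2) - (2*c) * (x^4 * Real.cos (π*x/2))
            + d * (x^2 * Real.cos (π*x/2))) :=
      intervalIntegral.integral_congr (fun x _ => by ring)
    rw [e2, intervalIntegral.integral_add (hf6.sub (hf4.const_mul _)) (hf2.const_mul _),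
      intervalIntegral.integral_sub hf6 (hf4.const_mul _),
      intervalIntegral.integral_const_mul, intervalIntegral.integral_const_mul,
      moment2, moment4, moment6, hc, hd]
    field_simp
    ring
end
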